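/- Uniform-in-θ vanishing of outlier influence for the γ-general posterior: if the outlier category probability satisfies f_ω(y_1|x_1;θ) ≤ ε(ω) for all θ with ε(ω) → 0 as ω → ∞, then sup_θ |r_γ,ω(y_1|x_1;θ)| ≤ (1/γ) (M^{γ/(1+γ)} ε(ω))^γ → 0, i.e., the outlier's contribution to the γ-loss vanishes uniformly in the parameter. -/

import Mathlib

open Filter Finset

/-- Uniform-in-θ vanishing of the outlier's γ-loss: if the
outlier category probability satisfies `f ω θ y ≤ ε ω` for all `θ` with
`ε ω → 0`, then the γ-loss is bounded uniformly in `θ` by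
`(1/γ)(M^{γ/(1+γ)} ε ω)^γ`, which tends to `0`. -/
theorem gamma_loss_vanishes_uniformly
    {Θ : Type*}
    (M : ℕ) (hM : 2 ≤ M) (γ : ℝ) (hγ : 0 < γ)
    (f : ℝ → Θ → Fin M → ℝ)
    (hnonneg : ∀ ω θ m, 0 ≤ f ω θ m)
    (hsum : ∀ ω θ, ∑ m, f ω θ m = 1)
    (y : Fin M)
    (ε : ℝ → ℝ) (hεnonneg : ∀ ω, 0 ≤ ε ω)
    (hε : ∀ ω θ, f ω θ y ≤ ε ω)
    (hεlim : Tendsto ε atTop (nhds 0)) :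
    (∀ ω θ,
      |(1 / γ) * (f ω θ y / (∑ m, (f ω θ m) ^ (1 + γ)) ^ (1 / (1 + γ))) ^ γ|
        ≤ (1 / γ) * ((M : ℝ) ^ (γ / (1 + γ)) * ε ω) ^ γ) ∧
    Tendsto (fun ω => (1 / γ) * ((M : ℝ) ^ (γ / (1 + γ)) * ε ω) ^ γ)
      atTop (nhds 0) := by
  have hMpos : (0 : ℝ) < M := by positivity
  have h1γ : (0 : ℝ) < 1 + γ := by linarith
  constructor
  · intro ω θ
    set S : ℝ := ∑ m, (f ω θ m) ^ (1 + γ) with hS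
    -- lower bound on S via power mean inequality
    have hkey : ((M : ℝ))⁻¹ ^ (1 + γ) * (M : ℝ) ≤ S := by
      have := Real.rpow_arith_mean_le_arith_mean_rpow (Finset.univ : Finset (Fin M))
        (fun _ => ((M : ℝ))⁻¹) (f ω θ) (fun i _ => by positivity)
        (by simp [Finset.card_univ, mul_inv_cancel₀ hMpos.ne']) (fun i _ => hnonneg ω θ i)
        (le_add_of_nonneg_right hγ.le)
      rw [← Finset.mul_sum, hsum ω θ, mul_one, ← Finset.mul_sum] at this
      calc ((M : ℝ))⁻¹ ^ (1 + γ) * (M : ℝ)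
          ≤ ((M : ℝ)⁻¹ * S) * (M : ℝ) := by
            apply mul_le_mul_of_nonneg_right this hMpos.le
        _ = S := by field_simp
    have hSlb : ((M : ℝ)) ^ (-γ) ≤ S := by
      calc ((M : ℝ)) ^ (-γ) = (M : ℝ) ^ (-(1 + γ)) * (M : ℝ) ^ (1 : ℝ) := by
            rw [← Real.rpow_add hMpos]; congr 1; ring
        _ = ((M : ℝ))⁻¹ ^ (1 + γ) * (M : ℝ) := by
            rw [Real.rpow_one, Real.inv_rpow hMpos.le, ← Real.rpow_neg hMpos.le]
        _ ≤ S := hkey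
    have hSpos : 0 < S := lt_of_lt_of_le (Real.rpow_pos_of_pos hMpos _) hSlb
    have hden : ((M : ℝ)) ^ (-(γ / (1 + γ))) ≤ S ^ (1 / (1 + γ)) := by
      calc ((M : ℝ)) ^ (-(γ / (1 + γ))) = (((M : ℝ)) ^ (-γ)) ^ (1 / (1 + γ)) := by
            rw [← Real.rpow_mul hMpos.le]; ring_nf
        _ ≤ S ^ (1 / (1 + γ)) :=
            Real.rpow_le_rpow (Real.rpow_pos_of_pos hMpos _).le hSlb (by positivity)
    have hdenpos : (0 : ℝ) < S ^ (1 / (1 + γ)) := Real.rpow_pos_of_pos hSpos _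
    have hratio : f ω θ y / S ^ (1 / (1 + γ)) ≤ (M : ℝ) ^ (γ / (1 + γ)) * ε ω := by
      rw [div_le_iff₀ hdenpos]
      calc f ω θ y ≤ ε ω := hε ω θ
        _ = ((M : ℝ) ^ (γ / (1 + γ)) * ε ω) * ((M : ℝ)) ^ (-(γ / (1 + γ))) := by
            rw [mul_comm ((M : ℝ) ^ (γ / (1 + γ))) (ε ω), mul_assoc,
              ← Real.rpow_add hMpos]
            simp
        _ ≤ ((M : ℝ) ^ (γ / (1 + γ)) * ε ω) * S ^ (1 / (1 + γ)) := by
            apply mul_le_mul_of_nonneg_left hden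
              (mul_nonneg (by positivity) (hεnonneg ω))
    have hbase : (0 : ℝ) ≤ f ω θ y / S ^ (1 / (1 + γ)) :=
      div_nonneg (hnonneg ω θ y) hdenpos.le
    rw [abs_of_nonneg (mul_nonneg (by positivity) (Real.rpow_nonneg hbase γ))]
    apply mul_le_mul_of_nonneg_left _ (by positivity)
    exact Real.rpow_le_rpow hbase hratio hγ.le
  · have h1 : Tendsto (fun ω => (M : ℝ) ^ (γ / (1 + γ)) * ε ω) atTop (nhds 0) := by
      simpa using hεlim.const_mul ((M : ℝ) ^ (γ / (1 + γ)))
    have h2 : Tendsto (fun ω => ((M : ℝ) ^ (γ / (1 + γ)) * ε ω) ^ γ) atTop (nhds 0) := by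
      have hc : ContinuousAt (fun x : ℝ => x ^ γ) 0 :=
        Real.continuousAt_rpow_const 0 γ (Or.inr hγ.le)
      have := hc.tendsto.comp h1
      simpa [Real.zero_rpow hγ.ne', Function.comp_def] using this
    simpa using h2.const_mul (1 / γ)
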